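/- Under the standing assumption, every differentiable solution p : [0,∞) → ℝ^𝓖_{≥0} of the recombination dynamics with p(0) ∈ S_𝓖 converges, as t → ∞, to the unique equilibrium in the marginal compatibility class M(p(0)), namely the point q with q(g) = ∏_{i ∈ 𝓛} pᵢ(0)(gᵢ) for all g ∈ 𝓖, where pᵢ(0) are the marginals of the initial condition. -/

import Mathlib

open Finset

/-- Recombination of gametes `g` and `h` following pattern `{I, Iᶜ}`:
`(g_I h_J)ᵢ = gᵢ` for `i ∈ I` and `= hᵢ` for `i ∈ J = Iᶜ`. -/
def recomb {L : Type} [DecidableEq L] {A : L → Type} (I : Finset L)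
    (g h : ∀ i, A i) : ∀ i, A i :=
  fun i => if i ∈ I then g i else h i

/-- The recombination vector field
`F(p) = (1/2) Σ_{g,h} Σ_{{I,J} ∈ 𝓟} c({I,J}) p(g) p(h) (g_I h_J + g_J h_I − g − h)`,
where the sum over unordered patterns `{I,J}` is written as `(1/2) Σ_{I : Finset L}`
(every unordered pattern `{I, Iᶜ}` corresponds to exactly two subsets `I` and `Iᶜ`;
the rate constants satisfy `c I = c Iᶜ`). -/
noncomputable def recF {L : Type} [Fintype L] [DecidableEq L] {A : L → Type}
    [∀ i, Fintype (A i)] [∀ i, DecidableEq (A i)]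
    (c : Finset L → ℝ) (p : (∀ i, A i) → ℝ) : (∀ i, A i) → ℝ :=
  fun x => (1 / 4) * ∑ g : ∀ i, A i, ∑ h : ∀ i, A i, ∑ I : Finset L,
    c I * p g * p h *
      ((if x = recomb I g h then 1 else 0) + (if x = recomb Iᶜ g h then 1 else 0)
        - (if x = g then 1 else 0) - (if x = h then 1 else 0))

/-- The marginal frequency `pᵢ(a) = Σ_{g : gᵢ = a} p(g)`. -/
noncomputable def marg {L : Type} [Fintype L] [DecidableEq L] {A : L → Type}
    [∀ i, Fintype (A i)] [∀ i, DecidableEq (A i)]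
    (p : (∀ i, A i) → ℝ) (i : L) (a : A i) : ℝ :=
  ∑ g : ∀ j, A j, if g i = a then p g else 0

open Filter

section AuxRecomb

set_option linter.unusedSectionVars false

variable {L : Type} [Fintype L] [DecidableEq L] {A : L → Type}
  [∀ i, Fintype (A i)] [∀ i, DecidableEq (A i)]

/-- Marginal of `p` on the set of loci `U`, evaluated at `x` (depends only on `x|_U`). -/
noncomputable def mU (U : Finset L) (p : (∀ i, A i) → ℝ) (x : ∀ i, A i) : ℝ :=
  ∑ g : ∀ i, A i, if ∀ i ∈ U, g i = x i then p g else 0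

lemma mU_empty (p : (∀ i, A i) → ℝ) (x : ∀ i, A i) :
    mU (∅ : Finset L) p x = ∑ g, p g := by simp [mU]

lemma mU_univ (p : (∀ i, A i) → ℝ) (x : ∀ i, A i) :
    mU (univ : Finset L) p x = p x := by
  unfold mU
  rw [Finset.sum_eq_single_of_mem x (mem_univ x)]
  · simp
  · intro g _ hg
    rw [if_neg]
    intro h
    exact hg (funext fun i => h i (mem_univ i))

lemma mU_singleton (p : (∀ i, A i) → ℝ) (i : L) (x : ∀ i, A i) :
    mU ({i} : Finset L) p x = marg p i (x i) := by
  unfold mU marg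
  apply Finset.sum_congr rfl
  intro g _
  simp

lemma sum_marg (p : (∀ i, A i) → ℝ) (i : L) :
    ∑ a, marg p i a = ∑ g, p g := by
  unfold marg
  rw [Finset.sum_comm]
  apply Finset.sum_congr rfl
  intro g _
  simp

lemma mU_zero (U : Finset L) (x : ∀ i, A i) :
    mU U (0 : (∀ i, A i) → ℝ) x = 0 := by simp [mU]

lemma agrees_recomb (I U : Finset L) (a b x : ∀ i, A i) :
    (∀ i ∈ U, recomb I a b i = x i) ↔
      (∀ i ∈ I ∩ U, a i = x i) ∧ (∀ i ∈ Iᶜ ∩ U, b i = x i) := by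
  constructor
  · intro h
    constructor
    · intro i hi
      rw [mem_inter] at hi
      have := h i hi.2
      simpa [recomb, hi.1] using this
    · intro i hi
      rw [mem_inter, mem_compl] at hi
      have := h i hi.2
      simpa [recomb, hi.1] using this
  · rintro ⟨h1, h2⟩ i hi
    by_cases hI : i ∈ I
    · simpa [recomb, hI] using h1 i (mem_inter.mpr ⟨hI, hi⟩)
    · simpa [recomb, hI] using h2 i (mem_inter.mpr ⟨mem_compl.mpr hI, hi⟩)

set_option maxHeartbeats 1000000 in
/-- The fundamental marginalization identity for the recombination vector field. -/
lemma mU_recF (c : Finset L → ℝ) (p : (∀ i, A i) → ℝ) (U : Finset L) (x : ∀ i, A i) :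
    mU U (recF c p) x = (1/2) * ∑ I : Finset L,
      c I * (mU (I ∩ U) p x * mU (Iᶜ ∩ U) p x - mU U p x * mU ∅ p x) := by
  classical
  have hgsum : ∀ (y : ∀ i, A i),
      (∑ g : ∀ i, A i, (if (∀ i ∈ U, g i = x i) then (1:ℝ) else 0) *
        (if g = y then (1:ℝ) else 0)) = (if (∀ i ∈ U, y i = x i) then (1:ℝ) else 0) := by
    intro y
    rw [Finset.sum_eq_single_of_mem y (Finset.mem_univ y)]
    · simp
    · intro g _ hgy; simp [hgy]
  have iteand : ∀ (P Q : Prop) [Decidable P] [Decidable Q],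
      (if (P ∧ Q) then (1:ℝ) else 0) = (if P then (1:ℝ) else 0) * (if Q then (1:ℝ) else 0) := by
    intro P Q _ _
    by_cases hP : P <;> by_cases hQ : Q <;> simp [hP, hQ]
  have comm_g : ∀ f : (∀ i, A i) → (∀ i, A i) → (∀ i, A i) → Finset L → ℝ,
      ∑ g : ∀ i, A i, ∑ a : ∀ i, A i, ∑ b : ∀ i, A i, ∑ I : Finset L, f g a b I
        = ∑ a : ∀ i, A i, ∑ b : ∀ i, A i, ∑ I : Finset L, ∑ g : ∀ i, A i, f g a b I := by
    intro f
    rw [Finset.sum_comm]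
    refine Finset.sum_congr rfl fun a _ => ?_
    rw [Finset.sum_comm]
    refine Finset.sum_congr rfl fun b _ => ?_
    rw [Finset.sum_comm]
  have expand : mU U (recF c p) x
      = ∑ g : ∀ i, A i, (if (∀ i ∈ U, g i = x i) then (1:ℝ) else 0) * recF c p g := by
    unfold mU
    refine Finset.sum_congr rfl fun g _ => ?_
    split <;> simp
  -- step 2 : bring g-sum innermost
  have step2 : mU U (recF c p) x
      = ∑ a : ∀ i, A i, ∑ b : ∀ i, A i, ∑ I : Finset L,
          (1/4) * (c I * (p a * (p b *
            (∑ g : ∀ i, A i, (if (∀ i ∈ U, g i = x i) then (1:ℝ) else 0) *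
              ((if g = recomb I a b then (1:ℝ) else 0) + (if g = recomb Iᶜ a b then (1:ℝ) else 0)
                - (if g = a then (1:ℝ) else 0) - (if g = b then (1:ℝ) else 0)))))) := by
    rw [expand]
    unfold recF
    simp only [Finset.mul_sum]
    rw [comm_g]
    refine Finset.sum_congr rfl fun a _ => Finset.sum_congr rfl fun b _ => ?_
    refine Finset.sum_congr rfl fun I _ => Finset.sum_congr rfl fun g _ => ?_
    ring
  -- step 3 : evaluate the g-sum
  have step3 : ∀ (a b : ∀ i, A i) (I : Finset L),
      (∑ g : ∀ i, A i, (if (∀ i ∈ U, g i = x i) then (1:ℝ) else 0) *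
        ((if g = recomb I a b then (1:ℝ) else 0) + (if g = recomb Iᶜ a b then (1:ℝ) else 0)
          - (if g = a then (1:ℝ) else 0) - (if g = b then (1:ℝ) else 0)))
      = (if (∀ i ∈ I ∩ U, a i = x i) then (1:ℝ) else 0) *
          (if (∀ i ∈ Iᶜ ∩ U, b i = x i) then (1:ℝ) else 0)
        + (if (∀ i ∈ Iᶜ ∩ U, a i = x i) then (1:ℝ) else 0) *
          (if (∀ i ∈ I ∩ U, b i = x i) then (1:ℝ) else 0)
        - (if (∀ i ∈ U, a i = x i) then (1:ℝ) else 0)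
        - (if (∀ i ∈ U, b i = x i) then (1:ℝ) else 0) := by
    intro a b I
    simp only [mul_add, mul_sub, Finset.sum_add_distrib, Finset.sum_sub_distrib]
    rw [hgsum, hgsum, hgsum, hgsum]
    simp only [agrees_recomb I U a b x, agrees_recomb Iᶜ U a b x, compl_compl]
    rw [iteand, iteand]
  -- per-I pieces
  have p1 : ∀ (V W : Finset L),
      (∑ a : ∀ i, A i, ∑ b : ∀ i, A i, (p a * p b *
        ((if (∀ i ∈ V, a i = x i) then (1:ℝ) else 0) *
          (if (∀ i ∈ W, b i = x i) then (1:ℝ) else 0))))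
      = mU V p x * mU W p x := by
    intro V W
    unfold mU
    rw [Finset.sum_mul_sum]
    refine Finset.sum_congr rfl fun a _ => Finset.sum_congr rfl fun b _ => ?_
    split_ifs <;> ring
  have p3 : ∀ (V : Finset L),
      (∑ a : ∀ i, A i, ∑ b : ∀ i, A i, (p a * p b *
        (if (∀ i ∈ V, a i = x i) then (1:ℝ) else 0)))
      = mU V p x * mU ∅ p x := by
    intro V
    have h0 : mU (∅ : Finset L) p x = ∑ g : ∀ i, A i, p g := by simp [mU]
    rw [h0]
    unfold mU
    rw [Finset.sum_mul_sum]
    refine Finset.sum_congr rfl fun a _ => Finset.sum_congr rfl fun b _ => ?_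
    split_ifs <;> ring
  have p4 : ∀ (V : Finset L),
      (∑ a : ∀ i, A i, ∑ b : ∀ i, A i, (p a * p b *
        (if (∀ i ∈ V, b i = x i) then (1:ℝ) else 0)))
      = mU ∅ p x * mU V p x := by
    intro V
    have h0 : mU (∅ : Finset L) p x = ∑ g : ∀ i, A i, p g := by simp [mU]
    rw [h0]
    unfold mU
    rw [Finset.sum_mul_sum]
    refine Finset.sum_congr rfl fun a _ => Finset.sum_congr rfl fun b _ => ?_
    split_ifs <;> ring
  rw [step2]
  have swapI : ∀ f : (∀ i, A i) → (∀ i, A i) → Finset L → ℝ,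
      ∑ a : ∀ i, A i, ∑ b : ∀ i, A i, ∑ I : Finset L, f a b I
        = ∑ I : Finset L, ∑ a : ∀ i, A i, ∑ b : ∀ i, A i, f a b I := by
    intro f
    have h1 : ∀ a : ∀ i, A i, ∑ b : ∀ i, A i, ∑ I : Finset L, f a b I
        = ∑ I : Finset L, ∑ b : ∀ i, A i, f a b I := fun a => Finset.sum_comm
    simp_rw [h1]
    exact Finset.sum_comm
  rw [swapI, Finset.mul_sum]
  refine Finset.sum_congr rfl fun I _ => ?_
  -- now fixed I
  calc ∑ a : ∀ i, A i, ∑ b : ∀ i, A i,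
        (1/4) * (c I * (p a * (p b *
          (∑ g : ∀ i, A i, (if (∀ i ∈ U, g i = x i) then (1:ℝ) else 0) *
            ((if g = recomb I a b then (1:ℝ) else 0) + (if g = recomb Iᶜ a b then (1:ℝ) else 0)
              - (if g = a then (1:ℝ) else 0) - (if g = b then (1:ℝ) else 0))))))
      = ∑ a : ∀ i, A i, ∑ b : ∀ i, A i, ((1/4) * c I) *
          ((p a * p b * ((if (∀ i ∈ I ∩ U, a i = x i) then (1:ℝ) else 0) *
              (if (∀ i ∈ Iᶜ ∩ U, b i = x i) then (1:ℝ) else 0)))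
            + (p a * p b * ((if (∀ i ∈ Iᶜ ∩ U, a i = x i) then (1:ℝ) else 0) *
              (if (∀ i ∈ I ∩ U, b i = x i) then (1:ℝ) else 0)))
            - (p a * p b * (if (∀ i ∈ U, a i = x i) then (1:ℝ) else 0))
            - (p a * p b * (if (∀ i ∈ U, b i = x i) then (1:ℝ) else 0))) := by
        refine Finset.sum_congr rfl fun a _ => Finset.sum_congr rfl fun b _ => ?_
        rw [step3 a b I]
        ring
    _ = ((1/4) * c I) * ((mU (I ∩ U) p x * mU (Iᶜ ∩ U) p x)
          + (mU (Iᶜ ∩ U) p x * mU (I ∩ U) p x)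
          - (mU U p x * mU ∅ p x) - (mU ∅ p x * mU U p x)) := by
        simp only [← Finset.mul_sum]
        rw [← p1 (I ∩ U) (Iᶜ ∩ U), ← p1 (Iᶜ ∩ U) (I ∩ U), ← p3 U, ← p4 U]
        simp only [Finset.sum_add_distrib, Finset.sum_sub_distrib, Finset.mul_sum]
    _ = (1/2) * (c I * (mU (I ∩ U) p x * mU (Iᶜ ∩ U) p x - mU U p x * mU ∅ p x)) := by ring

/-- Marginal on `U` of a product measure. -/
lemma mU_prod (U : Finset L) (F : ∀ i, A i → ℝ) (x : ∀ i, A i) :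
    mU U (fun g => ∏ i, F i (g i)) x
      = (∏ i ∈ U, F i (x i)) * ∏ i ∈ Uᶜ, (∑ a, F i a) := by
  classical
  have hpt : ∀ g : ∀ i, A i, (if ∀ i ∈ U, g i = x i then ∏ i, F i (g i) else 0)
      = ∏ i, (if i ∈ U then (if g i = x i then F i (g i) else 0) else F i (g i)) := by
    intro g
    by_cases h : ∀ i ∈ U, g i = x i
    · rw [if_pos h]
      refine Finset.prod_congr rfl fun i _ => ?_
      by_cases hi : i ∈ U
      · rw [if_pos hi, if_pos (h i hi)]
      · rw [if_neg hi]
    · rw [if_neg h]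
      push_neg at h
      obtain ⟨i, hiU, hne⟩ := h
      exact (Finset.prod_eq_zero (mem_univ i) (by rw [if_pos hiU, if_neg hne])).symm
  unfold mU
  simp_rw [hpt]
  rw [← Fintype.prod_sum (fun i (b : A i) => if i ∈ U then (if b = x i then F i b else 0) else F i b)]
  rw [← Finset.prod_mul_prod_compl U]
  congr 1
  · refine Finset.prod_congr rfl fun i hi => ?_
    simp only [if_pos hi]
    have : ∀ b : A i, (if b = x i then F i b else 0) = (if b = x i then F i (x i) else 0) := by
      intro b; split_ifs with hb
      · rw [hb]
      · rfl
    simp_rw [this]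
    simp
  · refine Finset.prod_congr rfl fun i hi => ?_
    rw [mem_compl] at hi
    simp [hi]

end AuxRecomb

/-- Functions with vanishing derivative on `[0, ∞)` are constant there. -/
lemma const_of_deriv_zero {f : ℝ → ℝ} (hf : ∀ t, 0 ≤ t → HasDerivAt f 0 t) :
    ∀ t, 0 ≤ t → f t = f 0 := by
  intro t ht
  have := constant_of_has_deriv_right_zero (f := f) (a := 0) (b := t)
    (fun s hs => (hf s hs.1).continuousAt.continuousWithinAt)
    (fun s hs => (hf s hs.1).hasDerivWithinAt)
  exact this t ⟨ht, le_rfl⟩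

/-- Convergence for the scalar linear ODE `f' = g - R f` with converging forcing. -/
lemma ode_tendsto {f g : ℝ → ℝ} {R l : ℝ} (hR : 0 < R)
    (hf : ∀ t, 0 ≤ t → HasDerivAt f (g t - R * f t) t)
    (hg : Tendsto g atTop (nhds l)) :
    Tendsto f atTop (nhds (l / R)) := by
  set φ : ℝ → ℝ := fun t => Real.exp (R * t) * (f t - l / R) with hφ
  have hφd : ∀ t, 0 ≤ t → HasDerivAt φ (Real.exp (R * t) * (g t - l)) t := by
    intro t ht
    have he : HasDerivAt (fun s => Real.exp (R * s)) (Real.exp (R * t) * R) t := by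
      simpa using ((hasDerivAt_id t).const_mul R).exp
    have := he.fun_mul ((hf t ht).sub_const (l / R))
    refine this.congr_deriv ?_
    have hRl : R * (l / R) = l := mul_div_cancel₀ l hR.ne'
    linear_combination (-Real.exp (R * t)) * hRl
  rw [Metric.tendsto_atTop]
  intro ε hε
  obtain ⟨T₀, hT₀⟩ := (Metric.tendsto_atTop.mp hg) (R * (ε / 4)) (by positivity)
  set T := max T₀ 0 with hT
  have hTnn : (0:ℝ) ≤ T := le_max_right _ _
  have hgb : ∀ s, T ≤ s → |g s - l| ≤ R * (ε / 4) := by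
    intro s hs
    have := hT₀ s (le_trans (le_max_left _ _) hs)
    rw [Real.dist_eq] at this
    exact this.le
  set ψ : ℝ → ℝ := fun t => (ε / 4) * Real.exp (R * t) with hψ
  have hψd : ∀ t, HasDerivAt ψ ((ε / 4) * (Real.exp (R * t) * R)) t := by
    intro t
    simpa using (((hasDerivAt_id t).const_mul R).exp).const_mul (ε / 4)
  have key : ∀ t, T ≤ t → |φ t - φ T| ≤ ψ t - ψ T := by
    intro t htT
    have hmono : ∀ (σ : ℝ), σ = 1 ∨ σ = -1 → MonotoneOn (fun s => ψ s - σ * φ s) (Set.Ici T) := by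
      intro σ hσ
      have hder : ∀ s, T ≤ s → HasDerivAt (fun s => ψ s - σ * φ s)
          ((ε / 4) * (Real.exp (R * s) * R) - σ * (Real.exp (R * s) * (g s - l))) s :=
        fun s hs => (hψd s).sub ((hφd s (le_trans hTnn hs)).const_mul σ)
      apply monotoneOn_of_deriv_nonneg (convex_Ici T)
      · exact fun s hs => (hder s hs).continuousAt.continuousWithinAt
      · intro s hs
        rw [interior_Ici] at hs
        exact ((hder s hs.le).differentiableAt.differentiableWithinAt)
      · intro s hs
        rw [interior_Ici] at hs
        rw [(hder s hs.le).deriv]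
        have h1 : |σ * (Real.exp (R * s) * (g s - l))| ≤ (ε / 4) * (Real.exp (R * s) * R) := by
          rw [abs_mul, abs_mul]
          have hσ1 : |σ| = 1 := by rcases hσ with h | h <;> simp [h]
          rw [hσ1, one_mul, abs_of_pos (Real.exp_pos _)]
          calc Real.exp (R * s) * |g s - l| ≤ Real.exp (R * s) * (R * (ε / 4)) := by
                exact mul_le_mul_of_nonneg_left (hgb s hs.le) (Real.exp_pos _).le
            _ = (ε / 4) * (Real.exp (R * s) * R) := by ring
        linarith [neg_abs_le (σ * (Real.exp (R * s) * (g s - l))),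
          le_abs_self (σ * (Real.exp (R * s) * (g s - l)))]
    have h1 := hmono 1 (Or.inl rfl) (Set.self_mem_Ici) (Set.mem_Ici.mpr htT) htT
    have h2 := hmono (-1) (Or.inr rfl) (Set.self_mem_Ici) (Set.mem_Ici.mpr htT) htT
    simp only [one_mul, neg_one_mul, sub_neg_eq_add] at h1 h2
    rw [abs_sub_le_iff]
    constructor <;> linarith
  have hψT : ∀ t, T ≤ t → |φ t| ≤ |φ T| + ψ t := by
    intro t htT
    have := key t htT
    have hψTpos : 0 < ψ T := by positivity
    have := abs_sub_abs_le_abs_sub (φ t) (φ T)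
    linarith [abs_nonneg (φ t - φ T)]
  have hbound : ∀ t, T ≤ t → |f t - l / R| ≤ |φ T| * Real.exp (-(R * t)) + ε / 4 := by
    intro t htT
    have hexp : Real.exp (R * t) > 0 := Real.exp_pos _
    have hft : f t - l / R = φ t * Real.exp (-(R * t)) := by
      rw [hφ]
      simp only [Real.exp_neg]
      field_simp
    rw [hft, abs_mul, abs_of_pos (Real.exp_pos (-(R * t)))]
    have := hψT t htT
    have h2 : |φ t| * Real.exp (-(R * t)) ≤ (|φ T| + ψ t) * Real.exp (-(R * t)) :=
      mul_le_mul_of_nonneg_right this (Real.exp_pos _).le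
    have h3 : ψ t * Real.exp (-(R * t)) = ε / 4 := by
      rw [hψ]
      simp only [Real.exp_neg]
      field_simp
    nlinarith [Real.exp_pos (-(R * t))]
  have hlim : Tendsto (fun t => |φ T| * Real.exp (-(R * t))) atTop (nhds 0) := by
    have h1 : Tendsto (fun t : ℝ => -(R * t)) atTop atBot :=
      tendsto_neg_atBot_iff.mpr (tendsto_id.const_mul_atTop hR)
    have h2 : Tendsto (fun t : ℝ => Real.exp (-(R * t))) atTop (nhds 0) :=
      Real.tendsto_exp_atBot.comp h1
    simpa using h2.const_mul (|φ T|)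
  obtain ⟨N₀, hN₀⟩ := (Metric.tendsto_atTop.mp hlim) (ε / 4) (by positivity)
  refine ⟨max N₀ T, fun t htN => ?_⟩
  have htT : T ≤ t := le_trans (le_max_right _ _) htN
  have htN0 : N₀ ≤ t := le_trans (le_max_left _ _) htN
  have h1 := hbound t htT
  have h2 := hN₀ t htN0
  rw [Real.dist_eq, sub_zero] at h2
  rw [Real.dist_eq]
  have : |φ T| * Real.exp (-(R * t)) < ε / 4 := by
    have := abs_of_nonneg (mul_nonneg (abs_nonneg (φ T)) (Real.exp_pos (-(R * t))).le)
    rw [this] at h2; exact h2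
  calc |f t - l / R| ≤ |φ T| * Real.exp (-(R * t)) + ε / 4 := h1
    _ < ε / 4 + ε / 4 := by linarith
    _ < ε := by linarith

/-- **Global convergence in every marginal compatibility class (Theorem 5).**
Under the standing assumption, every differentiable nonnegative solution of the
recombination dynamics starting in the simplex `S_𝓖` converges, as `t → ∞`, to the
unique equilibrium in the marginal compatibility class `M(p(0))`, namely the point
`q(g) = ∏ᵢ pᵢ(0)(gᵢ)`, the product of the marginals of the initial condition. -/
theorem convergence_to_product_of_marginals
    {L : Type} [Fintype L] [DecidableEq L] [Nonempty L]
    (A : L → Type) [∀ i, Fintype (A i)] [∀ i, DecidableEq (A i)]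
    (hA : ∀ i, 2 ≤ Fintype.card (A i))
    (c : Finset L → ℝ) (hc : ∀ I, 0 ≤ c I) (hcsym : ∀ I, c I = c Iᶜ)
    (hsep : ∀ i j : L, i ≠ j →
      0 < ∑ I ∈ univ.filter (fun I : Finset L => i ∈ I ∧ j ∉ I), c I)
    (p : ℝ → (∀ i, A i) → ℝ)
    (hnn : ∀ t, 0 ≤ t → ∀ g, 0 ≤ p t g)
    (hode : ∀ t, 0 ≤ t → HasDerivAt p (recF c (p t)) t)
    (hp1 : ∑ g : ∀ i, A i, p 0 g = 1)
    (q : (∀ i, A i) → ℝ) (hq : q = fun g => ∏ i : L, marg (p 0) i (g i)) :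
    ((∀ g, 0 ≤ q g) ∧ (∀ (i : L) (a : A i), marg q i a = marg (p 0) i a) ∧
      recF c q = 0 ∧
      (∀ r : (∀ i, A i) → ℝ, (∀ g, 0 ≤ r g) →
        (∀ (i : L) (a : A i), marg r i a = marg (p 0) i a) → recF c r = 0 → r = q)) ∧
    Tendsto p atTop (nhds q) := by
  classical
  haveI hAne : ∀ j, Nonempty (A j) := fun j => Fintype.card_pos_iff.mp (by have := hA j; omega)
  -- marginals of the initial condition sum to one
  have hsum_marg : ∀ i : L, ∑ a, marg (p 0) i a = 1 := fun i => (sum_marg (p 0) i).trans hp1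
  -- the marginals of q
  have hmUq : ∀ (U : Finset L) (x : ∀ i, A i),
      mU U q x = ∏ i ∈ U, marg (p 0) i (x i) := by
    intro U x
    have h1 : ∏ i ∈ Uᶜ, (∑ a, marg (p 0) i a) = 1 :=
      Finset.prod_eq_one (fun i _ => hsum_marg i)
    rw [hq, mU_prod, h1, mul_one]
  -- nonnegativity of marginals
  have hmargnn : ∀ (i : L) (a : A i), 0 ≤ marg (p 0) i a := by
    intro i a
    apply Finset.sum_nonneg
    intro g _
    split
    · exact hnn 0 le_rfl g
    · exact le_rfl
  -- q is nonnegative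
  have hqnn : ∀ g, 0 ≤ q g := by
    intro g; rw [hq]
    exact Finset.prod_nonneg fun i _ => hmargnn i (g i)
  -- marginals of q agree with marginals of p 0
  have hqmarg : ∀ (i : L) (a : A i), marg q i a = marg (p 0) i a := by
    intro i a
    set x : ∀ j, A j := Function.update (fun j => Classical.arbitrary (A j)) i a with hx
    have hxi : x i = a := Function.update_self i a _
    have h1 : marg q i a = mU {i} q x := by rw [mU_singleton, hxi]
    rw [h1, hmUq, Finset.prod_singleton, hxi]
  -- q is an equilibrium
  have hqF : recF c q = 0 := by
    funext x
    have h := mU_recF c q univ x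
    rw [mU_univ] at h
    rw [h]
    have : ∀ I : Finset L,
        c I * (mU (I ∩ univ) q x * mU (Iᶜ ∩ univ) q x - mU univ q x * mU ∅ q x) = 0 := by
      intro I
      rw [inter_univ, inter_univ, hmUq, hmUq, hmUq, hmUq]
      rw [Finset.prod_mul_prod_compl I (fun i => marg (p 0) i (x i))]
      simp
    rw [Finset.sum_eq_zero (fun I _ => this I)]
    simp
  -- uniqueness of the equilibrium in the marginal class
  have huniq : ∀ r : (∀ i, A i) → ℝ, (∀ g, 0 ≤ r g) →
      (∀ (i : L) (a : A i), marg r i a = marg (p 0) i a) → recF c r = 0 → r = q := by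
    intro r _ hrm hrF
    have hr1 : ∑ g, r g = 1 := by
      obtain ⟨i0⟩ := ‹Nonempty L›
      rw [← sum_marg r i0, Finset.sum_congr rfl (fun a _ => hrm i0 a)]
      exact hsum_marg i0
    have main : ∀ n : ℕ, ∀ U : Finset L, U.card ≤ n → ∀ x : ∀ i, A i,
        mU U r x = ∏ i ∈ U, marg (p 0) i (x i) := by
      intro n
      induction n with
      | zero =>
        intro U hU x
        rw [Nat.le_zero, Finset.card_eq_zero] at hU
        subst hU
        rw [mU_empty, Finset.prod_empty]
        exact hr1
      | succ n ih =>
        intro U hU x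
        rcases lt_or_ge U.card (n+1) with h | h
        · exact ih U (Nat.lt_succ_iff.mp h) x
        have hcard : U.card = n + 1 := le_antisymm hU h
        by_cases hU1 : U.card ≤ 1
        · -- singleton
          obtain ⟨i, rfl⟩ := Finset.card_eq_one.mp (le_antisymm hU1 (by omega))
          rw [mU_singleton, hrm, Finset.prod_singleton]
        · push_neg at hU1
          obtain ⟨i, hiU, j, hjU, hij⟩ := Finset.one_lt_card.mp hU1
          have hEm : mU (∅ : Finset L) r x = 1 := by rw [mU_empty]; exact hr1
          have heq : mU U (recF c r) x = 0 := by rw [hrF]; exact mU_zero U x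
          rw [mU_recF] at heq
          set Q : ℝ := ∏ i ∈ U, marg (p 0) i (x i) with hQ
          set P : Finset (Finset L) :=
            univ.filter (fun I => (I ∩ U).Nonempty ∧ (Iᶜ ∩ U).Nonempty) with hPdef
          -- evaluate each term of the sum
          have hterm : ∀ I : Finset L,
              c I * (mU (I ∩ U) r x * mU (Iᶜ ∩ U) r x - mU U r x * mU ∅ r x)
              = (if (I ∩ U).Nonempty ∧ (Iᶜ ∩ U).Nonempty
                  then c I * (Q - mU U r x) else 0) := by
            intro I
            by_cases hP : (I ∩ U).Nonempty ∧ (Iᶜ ∩ U).Nonempty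
            · rw [if_pos hP]
              have hss1 : I ∩ U ⊂ U := by
                refine Finset.ssubset_iff_of_subset (inter_subset_right) |>.mpr ?_
                obtain ⟨k, hk⟩ := hP.2
                rw [mem_inter, mem_compl] at hk
                exact ⟨k, hk.2, fun hmem => hk.1 (mem_inter.mp hmem).1⟩
              have hss2 : Iᶜ ∩ U ⊂ U := by
                refine Finset.ssubset_iff_of_subset (inter_subset_right) |>.mpr ?_
                obtain ⟨k, hk⟩ := hP.1
                rw [mem_inter] at hk
                exact ⟨k, hk.2, fun hmem => (mem_compl.mp (mem_inter.mp hmem).1) hk.1⟩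
              have hc1 : (I ∩ U).card ≤ n := by
                have := Finset.card_lt_card hss1; omega
              have hc2 : (Iᶜ ∩ U).card ≤ n := by
                have := Finset.card_lt_card hss2; omega
              rw [ih (I ∩ U) hc1 x, ih (Iᶜ ∩ U) hc2 x, hEm, mul_one]
              have hdisj : Disjoint (I ∩ U) (Iᶜ ∩ U) := by
                rw [Finset.disjoint_left]
                intro k hk1 hk2
                rw [mem_inter] at hk1 hk2
                exact (mem_compl.mp hk2.1) hk1.1
              have hunion : (I ∩ U) ∪ (Iᶜ ∩ U) = U := by
                ext k
                simp only [mem_union, mem_inter, mem_compl]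
                constructor
                · rintro (⟨_, h⟩ | ⟨_, h⟩) <;> exact h
                · intro hk
                  by_cases hkI : k ∈ I
                  · exact Or.inl ⟨hkI, hk⟩
                  · exact Or.inr ⟨hkI, hk⟩
              rw [← Finset.prod_union hdisj, hunion]
            · rw [if_neg hP]
              rw [not_and_or] at hP
              rcases hP with hP | hP
              · rw [Finset.not_nonempty_iff_eq_empty] at hP
                have hIc : Iᶜ ∩ U = U := by
                  ext k
                  simp only [mem_inter, mem_compl]
                  constructor
                  · rintro ⟨_, h⟩; exact h
                  · intro hk
                    refine ⟨fun hkI => ?_, hk⟩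
                    exact absurd (Finset.eq_empty_iff_forall_notMem.mp hP k)
                      (by simp [mem_inter, hkI, hk])
                rw [hP, hIc, hEm]
                ring
              · rw [Finset.not_nonempty_iff_eq_empty] at hP
                have hIc : I ∩ U = U := by
                  ext k
                  simp only [mem_inter]
                  constructor
                  · rintro ⟨_, h⟩; exact h
                  · intro hk
                    refine ⟨?_, hk⟩
                    by_contra hkI
                    exact absurd (Finset.eq_empty_iff_forall_notMem.mp hP k)
                      (by simp [mem_inter, mem_compl, hkI, hk])
                rw [hP, hIc, hEm]
                ring
          -- turn the equation into R * (Q - f) = 0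
          have hsum : (∑ I : Finset L,
              c I * (mU (I ∩ U) r x * mU (Iᶜ ∩ U) r x - mU U r x * mU ∅ r x))
              = (∑ I ∈ P, c I) * (Q - mU U r x) := by
            rw [Finset.sum_mul, hPdef, Finset.sum_filter]
            exact Finset.sum_congr rfl fun I _ => hterm I
          rw [hsum] at heq
          have hRpos : 0 < ∑ I ∈ P, c I := by
            refine lt_of_lt_of_le (hsep i j hij)
              (Finset.sum_le_sum_of_subset_of_nonneg ?_ (fun I _ _ => hc I))
            intro I hI
            rw [Finset.mem_filter] at hI
            rw [hPdef, Finset.mem_filter]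
            exact ⟨mem_univ I, ⟨i, mem_inter.mpr ⟨hI.2.1, hiU⟩⟩,
              ⟨j, mem_inter.mpr ⟨mem_compl.mpr hI.2.2, hjU⟩⟩⟩
          have h0 : (∑ I ∈ P, c I) * (Q - mU U r x) = 0 := by linarith
          have := (mul_eq_zero.mp h0).resolve_left (ne_of_gt hRpos)
          linarith
    funext x
    have h := main (Finset.card (univ : Finset L)) univ (le_refl _) x
    rw [mU_univ] at h
    rw [h, hq]
  -- derivative of the U-marginal along the solution
  have hdmU : ∀ (U : Finset L) (x : ∀ i, A i) (t : ℝ), 0 ≤ t →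
      HasDerivAt (fun s => mU U (p s) x) (mU U (recF c (p t)) x) t := by
    intro U x t ht
    have h := hode t ht
    have hp : ∀ g : ∀ i, A i, HasDerivAt (fun s => p s g) (recF c (p t) g) t :=
      fun g => hasDerivAt_pi.mp h g
    unfold mU
    refine HasDerivAt.fun_sum fun g _ => ?_
    by_cases hg : ∀ i ∈ U, g i = x i
    · simp only [if_pos hg]
      exact hp g
    · simp only [if_neg hg]
      exact hasDerivAt_const t 0
  -- total mass is preserved
  have hS : ∀ t, 0 ≤ t → ∀ x : ∀ i, A i, mU (∅ : Finset L) (p t) x = 1 := by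
    have xdef : ∀ i, A i := fun i => Classical.arbitrary (A i)
    have hFzero : ∀ (t : ℝ) (x : ∀ i, A i), mU (∅ : Finset L) (recF c (p t)) x = 0 := by
      intro t x
      rw [mU_recF]
      have : ∀ I : Finset L, c I * (mU (I ∩ ∅) (p t) x * mU (Iᶜ ∩ ∅) (p t) x
          - mU ∅ (p t) x * mU ∅ (p t) x) = 0 := by
        intro I
        rw [Finset.inter_empty, Finset.inter_empty]
        ring
      rw [Finset.sum_eq_zero (fun I _ => this I)]
      simp
    have hconst : ∀ t, 0 ≤ t → mU (∅ : Finset L) (p t) xdef = mU ∅ (p 0) xdef := by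
      apply const_of_deriv_zero
      intro t ht
      have := hdmU ∅ xdef t ht
      rwa [hFzero t xdef] at this
    intro t ht x
    rw [mU_empty]
    have h1 := hconst t ht
    rw [mU_empty, mU_empty] at h1
    rw [h1, hp1]
  -- main convergence induction
  have conv : ∀ n : ℕ, ∀ U : Finset L, U.card ≤ n → ∀ x : ∀ i, A i,
      Tendsto (fun t => mU U (p t) x) atTop (nhds (∏ i ∈ U, marg (p 0) i (x i))) := by
    intro n
    induction n with
    | zero =>
      intro U hU x
      rw [Nat.le_zero, Finset.card_eq_zero] at hU
      subst hU
      rw [Finset.prod_empty]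
      have heve : (fun t => mU (∅ : Finset L) (p t) x) =ᶠ[atTop] (fun _ => (1:ℝ)) := by
        filter_upwards [eventually_ge_atTop (0:ℝ)] with t ht
        exact hS t ht x
      exact Tendsto.congr' heve.symm tendsto_const_nhds
    | succ n ih =>
      intro U hU x
      rcases lt_or_ge U.card (n+1) with h | h
      · exact ih U (Nat.lt_succ_iff.mp h) x
      have hcard : U.card = n + 1 := le_antisymm hU h
      by_cases hU1 : U.card ≤ 1
      · -- singleton : marginals are conserved
        obtain ⟨i, rfl⟩ := Finset.card_eq_one.mp (le_antisymm hU1 (by omega))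
        have hzero : ∀ t : ℝ, mU ({i} : Finset L) (recF c (p t)) x = 0 := by
          intro t
          rw [mU_recF]
          have : ∀ I : Finset L, c I * (mU (I ∩ {i}) (p t) x * mU (Iᶜ ∩ {i}) (p t) x
              - mU {i} (p t) x * mU ∅ (p t) x) = 0 := by
            intro I
            by_cases hi : i ∈ I
            · have h1 : I ∩ {i} = {i} := by
                ext k; simp only [mem_inter, mem_singleton]
                constructor
                · rintro ⟨_, h⟩; exact h
                · rintro rfl; exact ⟨hi, rfl⟩
              have h2 : Iᶜ ∩ {i} = ∅ := by
                ext k; simp only [mem_inter, mem_compl, mem_singleton, notMem_empty, iff_false]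
                rintro ⟨hk, rfl⟩; exact hk hi
              rw [h1, h2]
              ring
            · have h1 : I ∩ {i} = ∅ := by
                ext k; simp only [mem_inter, mem_singleton, notMem_empty, iff_false]
                rintro ⟨hk, rfl⟩; exact hi hk
              have h2 : Iᶜ ∩ {i} = {i} := by
                ext k; simp only [mem_inter, mem_compl, mem_singleton]
                constructor
                · rintro ⟨_, h⟩; exact h
                · rintro rfl; exact ⟨hi, rfl⟩
              rw [h1, h2]
              ring
          rw [Finset.sum_eq_zero (fun I _ => this I)]
          simp
        have hconst : ∀ t, 0 ≤ t → mU ({i} : Finset L) (p t) x = mU {i} (p 0) x := by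
          apply const_of_deriv_zero
          intro t ht
          have := hdmU {i} x t ht
          rwa [hzero t] at this
        rw [Finset.prod_singleton, ← mU_singleton (p 0) i x]
        have heve : (fun t => mU ({i} : Finset L) (p t) x) =ᶠ[atTop]
            (fun _ => mU ({i} : Finset L) (p 0) x) := by
          filter_upwards [eventually_ge_atTop (0:ℝ)] with t ht
          exact hconst t ht
        exact Tendsto.congr' heve.symm tendsto_const_nhds
      · -- at least two loci in U
        push_neg at hU1
        obtain ⟨i, hiU, j, hjU, hij⟩ := Finset.one_lt_card.mp hU1
        set Q : ℝ := ∏ i ∈ U, marg (p 0) i (x i) with hQ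
        set P : Finset (Finset L) :=
          univ.filter (fun I => (I ∩ U).Nonempty ∧ (Iᶜ ∩ U).Nonempty) with hPdef
        set R : ℝ := (1/2) * ∑ I ∈ P, c I with hRdef
        have hRpos' : 0 < ∑ I ∈ P, c I := by
          refine lt_of_lt_of_le (hsep i j hij)
            (Finset.sum_le_sum_of_subset_of_nonneg ?_ (fun I _ _ => hc I))
          intro I hI
          rw [Finset.mem_filter] at hI
          rw [hPdef, Finset.mem_filter]
          exact ⟨mem_univ I, ⟨i, mem_inter.mpr ⟨hI.2.1, hiU⟩⟩,
            ⟨j, mem_inter.mpr ⟨mem_compl.mpr hI.2.2, hjU⟩⟩⟩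
        have hRpos : 0 < R := by rw [hRdef]; positivity
        set gfun : ℝ → ℝ := fun t =>
          (1/2) * ∑ I ∈ P, c I * (mU (I ∩ U) (p t) x * mU (Iᶜ ∩ U) (p t) x) with hgdef
        -- derivative identity
        have hder : ∀ t, 0 ≤ t →
            HasDerivAt (fun s => mU U (p s) x) (gfun t - R * mU U (p t) x) t := by
          intro t ht
          have hd := hdmU U x t ht
          have hEm : mU (∅ : Finset L) (p t) x = 1 := hS t ht x
          have heq : mU U (recF c (p t)) x = gfun t - R * mU U (p t) x := by
            rw [mU_recF]
            have hrestrict : (∑ I : Finset L, c I * (mU (I ∩ U) (p t) x * mU (Iᶜ ∩ U) (p t) x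
                - mU U (p t) x * mU ∅ (p t) x))
                = ∑ I ∈ P, (c I * (mU (I ∩ U) (p t) x * mU (Iᶜ ∩ U) (p t) x)
                  - c I * mU U (p t) x) := by
              rw [← Finset.sum_subset (Finset.subset_univ P) ?_]
              · refine Finset.sum_congr rfl fun I hI => ?_
                rw [hEm]
                ring
              · intro I _ hIP
                have hIP' : ¬((I ∩ U).Nonempty ∧ (Iᶜ ∩ U).Nonempty) := by
                  intro hcontra
                  exact hIP (by rw [hPdef, Finset.mem_filter]; exact ⟨mem_univ I, hcontra⟩)
                rw [not_and_or] at hIP'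
                rcases hIP' with hP | hP
                · rw [Finset.not_nonempty_iff_eq_empty] at hP
                  have hIc : Iᶜ ∩ U = U := by
                    ext k
                    simp only [mem_inter, mem_compl]
                    constructor
                    · rintro ⟨_, h⟩; exact h
                    · intro hk
                      refine ⟨fun hkI => ?_, hk⟩
                      exact absurd (Finset.eq_empty_iff_forall_notMem.mp hP k)
                        (by simp [mem_inter, hkI, hk])
                  rw [hP, hIc, hEm]
                  ring
                · rw [Finset.not_nonempty_iff_eq_empty] at hP
                  have hIc : I ∩ U = U := by
                    ext k
                    simp only [mem_inter]
                    constructor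
                    · rintro ⟨_, h⟩; exact h
                    · intro hk
                      refine ⟨?_, hk⟩
                      by_contra hkI
                      exact absurd (Finset.eq_empty_iff_forall_notMem.mp hP k)
                        (by simp [mem_inter, mem_compl, hkI, hk])
                  rw [hP, hIc, hEm]
                  ring
            rw [hrestrict, Finset.sum_sub_distrib, ← Finset.sum_mul, hgdef, hRdef]
            ring
          rwa [heq] at hd
        -- limit of the forcing term
        have hglim : Tendsto gfun atTop (nhds (R * Q)) := by
          have hterm : ∀ I ∈ P, Tendsto
              (fun t => c I * (mU (I ∩ U) (p t) x * mU (Iᶜ ∩ U) (p t) x))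
              atTop (nhds (c I * Q)) := by
            intro I hIP
            rw [hPdef, Finset.mem_filter] at hIP
            obtain ⟨_, hP1, hP2⟩ := hIP
            have hss1 : I ∩ U ⊂ U := by
              refine Finset.ssubset_iff_of_subset (inter_subset_right) |>.mpr ?_
              obtain ⟨k, hk⟩ := hP2
              rw [mem_inter, mem_compl] at hk
              exact ⟨k, hk.2, fun hmem => hk.1 (mem_inter.mp hmem).1⟩
            have hss2 : Iᶜ ∩ U ⊂ U := by
              refine Finset.ssubset_iff_of_subset (inter_subset_right) |>.mpr ?_
              obtain ⟨k, hk⟩ := hP1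
              rw [mem_inter] at hk
              exact ⟨k, hk.2, fun hmem => (mem_compl.mp (mem_inter.mp hmem).1) hk.1⟩
            have hc1 : (I ∩ U).card ≤ n := by
              have := Finset.card_lt_card hss1; omega
            have hc2 : (Iᶜ ∩ U).card ≤ n := by
              have := Finset.card_lt_card hss2; omega
            have h1 := ih (I ∩ U) hc1 x
            have h2 := ih (Iᶜ ∩ U) hc2 x
            have h3 := (h1.mul h2).const_mul (c I)
            have hdisj : Disjoint (I ∩ U) (Iᶜ ∩ U) := by
              rw [Finset.disjoint_left]
              intro k hk1 hk2
              rw [mem_inter] at hk1 hk2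
              exact (mem_compl.mp hk2.1) hk1.1
            have hunion : (I ∩ U) ∪ (Iᶜ ∩ U) = U := by
              ext k
              simp only [mem_union, mem_inter, mem_compl]
              constructor
              · rintro (⟨_, h⟩ | ⟨_, h⟩) <;> exact h
              · intro hk
                by_cases hkI : k ∈ I
                · exact Or.inl ⟨hkI, hk⟩
                · exact Or.inr ⟨hkI, hk⟩
            have hprod : (∏ k ∈ I ∩ U, marg (p 0) k (x k)) *
                (∏ k ∈ Iᶜ ∩ U, marg (p 0) k (x k)) = Q := by
              rw [← Finset.prod_union hdisj, hunion]
            rwa [hprod] at h3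
          have h4 := tendsto_finset_sum P hterm
          have h5 := h4.const_mul (1/2 : ℝ)
          have h6 : (1/2 : ℝ) * ∑ I ∈ P, c I * Q = R * Q := by
            rw [← Finset.sum_mul, hRdef]
            ring
          rw [h6] at h5
          exact h5
        have hfin := ode_tendsto hRpos hder hglim
        have : R * Q / R = Q := by
          field_simp
        rwa [this] at hfin
  -- conclusion
  refine ⟨⟨hqnn, hqmarg, hqF, huniq⟩, ?_⟩
  rw [tendsto_pi_nhds]
  intro x
  have h := conv (Finset.card (univ : Finset L)) univ (le_refl _) x
  have hqx : q x = ∏ i ∈ univ, marg (p 0) i (x i) := by rw [hq]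
  rw [hqx]
  exact h.congr (fun t => mU_univ (p t) x)
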